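/- Let S be a numerical semigroup with multiplicity m. Then there exists a smallest MED numerical semigroup containing S with multiplicity m; namely, the intersection of all MED numerical semigroups T with S ⊆ T and m(T) = m is itself a MED numerical semigroup with multiplicity m containing S. -/
import Mathlib


/-- A numerical semigroup: an additive submonoid of ℕ with finite complement. -/
structure NumSgp where
  carrier : Set ℕ
  zero_mem : 0 ∈ carrier
  add_mem : ∀ ⦃a b : ℕ⦄, a ∈ carrier → b ∈ carrier → a + b ∈ carrier
  cofinite : carrierᶜ.Finite

/-- The multiplicity: the smallest nonzero element. -/
noncomputable def NumSgp.mult (S : NumSgp) : ℕ := sInf {n | n ∈ S.carrier ∧ n ≠ 0}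

/-- The Apéry set of `S` with respect to `s`: elements `x ∈ S` with `x - s ∉ S`
(over the integers, i.e. there is no `y ∈ S` with `y + s = x`). -/
def NumSgp.Ap (S : NumSgp) (s : ℕ) : Set ℕ :=
  {x | x ∈ S.carrier ∧ ∀ y ∈ S.carrier, y + s ≠ x}

/-- `z` is an Arf element of `S`. -/
def NumSgp.ArfElem (S : NumSgp) (z : ℕ) : Prop :=
  ∀ x ∈ S.carrier, ∀ y ∈ S.carrier, z ≤ x → z ≤ y → x + y - z ∈ S.carrier

/-- The minimal generating set: nonzero elements not expressible as a sum of two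
nonzero elements of `S`. -/
def NumSgp.minGen (S : NumSgp) : Set ℕ :=
  {x | x ∈ S.carrier ∧ x ≠ 0 ∧ ∀ a ∈ S.carrier, ∀ b ∈ S.carrier, a ≠ 0 → b ≠ 0 → a + b ≠ x}

/-- The embedding dimension: the cardinality of the minimal generating set. -/
noncomputable def NumSgp.edim (S : NumSgp) : ℕ := S.minGen.ncard

/-- The Frobenius number: the largest gap. -/
noncomputable def NumSgp.frob (S : NumSgp) : ℕ := sSup S.carrierᶜ

/-- The conductor: the smallest `c` with `c + ℤ≥0 ⊆ S`. -/
noncomputable def NumSgp.cond (S : NumSgp) : ℕ := sInf {c | ∀ n, c ≤ n → n ∈ S.carrier}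

/-- The genus: the number of gaps. -/
noncomputable def NumSgp.genus (S : NumSgp) : ℕ := S.carrierᶜ.ncard

/-- The set of pseudo-Frobenius numbers. -/
def NumSgp.PF (S : NumSgp) : Set ℕ :=
  {x | x ∉ S.carrier ∧ ∀ s ∈ S.carrier, s ≠ 0 → x + s ∈ S.carrier}

/-- The type of `S`: the number of pseudo-Frobenius numbers. -/
noncomputable def NumSgp.type (S : NumSgp) : ℕ := S.PF.ncard

/-- `S` is a MED semigroup: its multiplicity is an Arf element, i.e. for all
`x, y ∈ S` with `x, y ≥ m(S)`, `x + y - m(S) ∈ S`. -/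
def NumSgp.IsMED (S : NumSgp) : Prop := S.ArfElem S.mult


lemma NumSgp.mult_spec (S : NumSgp) : S.mult ∈ S.carrier ∧ S.mult ≠ 0 := by
  have h : {n | n ∈ S.carrier ∧ n ≠ 0}.Nonempty := by
    have hinf := S.cofinite.infinite_compl
    rw [compl_compl] at hinf
    obtain ⟨n, hn, hn0⟩ := hinf.exists_gt 0
    exact ⟨n, hn, hn0.ne'⟩
  exact Nat.sInf_mem h

lemma NumSgp.mult_le (S : NumSgp) {x : ℕ} (hx : x ∈ S.carrier) (hx0 : x ≠ 0) :
    S.mult ≤ x := Nat.sInf_le ⟨hx, hx0⟩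

/-- The largest numerical semigroup with multiplicity `m`. -/
def topMED (m : ℕ) : NumSgp where
  carrier := {0} ∪ {n | m ≤ n}
  zero_mem := Or.inl rfl
  add_mem := by
    rintro a b (ha | ha) (hb | hb) <;> simp_all [Set.mem_union] <;> omega
  cofinite := (Set.finite_Iio m).subset (by
    intro x hx
    simp only [Set.mem_compl_iff, Set.mem_union, Set.mem_singleton_iff,
      Set.mem_setOf_eq, not_or, not_le] at hx
    exact hx.2)

lemma topMED_mult {m : ℕ} (hm : m ≠ 0) : (topMED m).mult = m := by
  have hmem : m ∈ {n | n ∈ (topMED m).carrier ∧ n ≠ 0} := ⟨Or.inr (Set.mem_setOf_eq ▸ le_rfl), hm⟩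
  have h1 : (topMED m).mult ≤ m := Nat.sInf_le hmem
  have h2 := Nat.sInf_mem ⟨m, hmem⟩
  rcases h2.1 with h | h
  · exact absurd h h2.2
  · exact le_antisymm h1 h

lemma topMED_isMED {m : ℕ} (hm : m ≠ 0) : (topMED m).IsMED := by
  intro x hx y hy hmx hmy
  rw [topMED_mult hm] at hmx hmy ⊢
  right
  rcases hx with h | h
  · subst h; omega
  · simp only [Set.mem_setOf_eq] at h ⊢; omega

/-- The MED closure of `S`: the intersection of all MED numerical semigroups
containing `S` with the same multiplicity. -/
def NumSgp.MEDclosure (S : NumSgp) : Set ℕ :=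
  ⋂ T ∈ {T : NumSgp | S.carrier ⊆ T.carrier ∧ T.mult = S.mult ∧ T.IsMED}, T.carrier

theorem med_closure_exists (S : NumSgp) :
    ∃ S0 : NumSgp,
      S0.carrier = (⋂ T ∈ {T : NumSgp | S.carrier ⊆ T.carrier ∧ T.mult = S.mult ∧ T.IsMED},
        T.carrier) ∧
      S.carrier ⊆ S0.carrier ∧ S0.mult = S.mult ∧ S0.IsMED ∧
      ∀ T : NumSgp, S.carrier ⊆ T.carrier → T.mult = S.mult → T.IsMED →
        S0.carrier ⊆ T.carrier := by
  classical
  obtain ⟨hmmem, hm0⟩ := S.mult_spec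
  set m := S.mult with hmdef
  set Fam : Set NumSgp := {T : NumSgp | S.carrier ⊆ T.carrier ∧ T.mult = S.mult ∧ T.IsMED}
    with hFam
  have hTopSub : S.carrier ⊆ (topMED m).carrier := by
    intro s hs
    by_cases h : s = 0
    · exact Or.inl h
    · exact Or.inr (S.mult_le hs h)
  have hTop : topMED m ∈ Fam := ⟨hTopSub, topMED_mult hm0, topMED_isMED hm0⟩
  set C : Set ℕ := ⋂ T ∈ Fam, T.carrier with hC
  have hmemC : ∀ x, x ∈ C ↔ ∀ T ∈ Fam, x ∈ T.carrier := by
    intro x; simp [hC, Set.mem_iInter]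
  have hSC : S.carrier ⊆ C := by
    intro s hs
    rw [hmemC]
    intro T hT
    exact hT.1 hs
  have hmultC : sInf {n | n ∈ C ∧ n ≠ 0} = m := by
    have hmem : m ∈ {n | n ∈ C ∧ n ≠ 0} := ⟨hSC hmmem, hm0⟩
    have h1 : sInf {n | n ∈ C ∧ n ≠ 0} ≤ m := Nat.sInf_le hmem
    have h2 := Nat.sInf_mem ⟨m, hmem⟩
    have h3 : sInf {n | n ∈ C ∧ n ≠ 0} ∈ (topMED m).carrier :=
      (hmemC _).mp h2.1 _ hTop
    rcases h3 with h | h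
    · exact absurd h h2.2
    · exact le_antisymm h1 h
  refine ⟨⟨C, ?_, ?_, ?_⟩, rfl, hSC, hmultC, ?_, ?_⟩
  · rw [hmemC]; intro T _; exact T.zero_mem
  · intro a b ha hb
    rw [hmemC] at ha hb ⊢
    intro T hT
    exact T.add_mem (ha T hT) (hb T hT)
  · exact S.cofinite.subset (Set.compl_subset_compl.mpr hSC)
  · -- IsMED
    intro x hx y hy hmx hmy
    have hmx' : m ≤ x := by rw [← hmultC]; exact hmx
    have hmy' : m ≤ y := by rw [← hmultC]; exact hmy
    show x + y - sInf {n | n ∈ C ∧ n ≠ 0} ∈ C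
    rw [hmultC, hmemC]
    rw [hmemC] at hx hy
    intro T hT
    have := hT.2.2 x (hx T hT) y (hy T hT) (hT.2.1 ▸ hmx') (hT.2.1 ▸ hmy')
    rwa [hT.2.1] at this
  · intro T hST hmT hMED x hx
    exact (hmemC x).mp hx T ⟨hST, hmT, hMED⟩
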